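/- Let p ≥ 3 be prime and a ∈ ℚ_p with 0 < |a|_p < 1, such that -a is not a square in ℚ_p. Let x₀ ∈ ℚ_p with p^{-⌊v_p(a)/2⌋} ≤ |x₀|_p ≤ p^{⌊v_p(a)/2⌋}, and let x ∈ ℚ_p with |x - x₀|_p ≤ |x₀|_p/p. Then |φ²(x) - φ²(x₀)|_p ≤ |x - x₀|_p, where φ(z) = a·z + 1/z and φ² = φ ∘ φ. -/

import Mathlib

lemma sqrt_of_close_one (p : ℕ) [Fact p.Prime] (hp : 3 ≤ p) (u : ℚ_[p])
    (h : ‖1 - u‖ < 1) : ∃ c : ℚ_[p], c ^ 2 = u := by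
  have hu : ‖u‖ ≤ 1 := by
    have h1 : u = 1 + -(1 - u) := by ring
    have h2 : ‖(1 : ℚ_[p]) + -(1 - u)‖ ≤ max ‖(1 : ℚ_[p])‖ ‖-(1 - u)‖ :=
      Padic.nonarchimedean _ _
    rw [← h1, norm_neg, norm_one] at h2
    exact h2.trans (max_le le_rfl h.le)
  set U : ℤ_[p] := ⟨u, hu⟩ with hU
  set F : Polynomial ℤ_[p] := Polynomial.X ^ 2 - Polynomial.C U with hF
  have heval : F.eval 1 = 1 - U := by simp [hF]
  have hderiv : F.derivative.eval 1 = 2 := by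
    simp [hF, Polynomial.derivative_pow]
  have h2 : ‖(2 : ℤ_[p])‖ = 1 := by
    rw [show ((2:ℤ_[p])) = ((2:ℤ) : ℤ_[p]) by norm_num]
    by_contra hne
    have hlt : ‖((2:ℤ) : ℤ_[p])‖ < 1 :=
      lt_of_le_of_ne (PadicInt.norm_le_one _) hne
    rw [PadicInt.norm_int_lt_one_iff_dvd] at hlt
    have := Int.le_of_dvd (by norm_num) hlt
    omega
  have hnorm : ‖F.eval 1‖ < ‖F.derivative.eval 1‖ ^ 2 := by
    rw [heval, hderiv, h2]
    have : ‖(1 - U : ℤ_[p])‖ = ‖1 - u‖ := by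
      rw [PadicInt.norm_def]; norm_num [hU]; rfl
    rw [this]; simpa using h
  obtain ⟨z, hz, -⟩ := hensels_lemma hnorm
  refine ⟨(z : ℚ_[p]), ?_⟩
  have hzU : z ^ 2 = U := by
    have := hz
    simp [hF, sub_eq_zero] at this
    exact this
  have := congrArg (PadicInt.Coe.ringHom (p := p)) hzU
  exact this

theorem stmt18 (p : ℕ) [Fact p.Prime] (hp : 3 ≤ p) (a : ℚ_[p])
    (ha0 : 0 < ‖a‖) (ha1 : ‖a‖ < 1)
    (hsq : ¬ ∃ c : ℚ_[p], c ^ 2 = -a)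
    (x₀ : ℚ_[p])
    (hx₀1 : (p : ℝ) ^ (-(a.valuation / 2)) ≤ ‖x₀‖)
    (hx₀2 : ‖x₀‖ ≤ (p : ℝ) ^ (a.valuation / 2))
    (x : ℚ_[p]) (hx : ‖x - x₀‖ ≤ ‖x₀‖ / p) :
    ‖(fun z : ℚ_[p] => a * z + 1 / z)^[2] x -
      (fun z : ℚ_[p] => a * z + 1 / z)^[2] x₀‖ ≤ ‖x - x₀‖ := by
  have hq : (1 : ℝ) < p := by
    have : (3 : ℝ) ≤ p := by exact_mod_cast hp
    linarith
  have hq0 : (0 : ℝ) < p := by linarith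
  have hane : a ≠ 0 := by
    intro h; rw [h, norm_zero] at ha0; exact lt_irrefl _ ha0
  set v : ℤ := a.valuation with hv
  set m : ℤ := v / 2 with hm
  have hnorma : ‖a‖ = (p : ℝ) ^ (-v) := Padic.norm_eq_zpow_neg_valuation hane
  have hv1 : 1 ≤ v := by
    rw [hnorma] at ha1
    have : (p : ℝ) ^ (-v) < (p : ℝ) ^ (0 : ℤ) := by simpa using ha1
    have := (zpow_lt_zpow_iff_right₀ hq).mp this
    omega
  have h2m : 2 * m ≤ v := by omega
  have hx₀pos : 0 < ‖x₀‖ := lt_of_lt_of_le (zpow_pos hq0 _) hx₀1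
  have hx₀ne : x₀ ≠ 0 := by
    intro h; rw [h, norm_zero] at hx₀pos; exact lt_irrefl _ hx₀pos
  -- ‖a‖ * ‖x₀‖^2 ≤ 1 and ‖a‖ ≤ ‖x₀‖^2
  have hA1 : ‖a‖ * ‖x₀‖ ^ 2 ≤ 1 := by
    have hsq2 : ‖x₀‖ ^ 2 ≤ (p : ℝ) ^ (2 * m) := by
      have := pow_le_pow_left₀ hx₀pos.le hx₀2 2
      calc ‖x₀‖ ^ 2 ≤ ((p:ℝ) ^ m) ^ 2 := this
        _ = (p : ℝ) ^ (2 * m) := by rw [← zpow_natCast ((p:ℝ)^m) 2, ← zpow_mul]; ring_nf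
    calc ‖a‖ * ‖x₀‖ ^ 2 ≤ (p : ℝ) ^ (-v) * (p : ℝ) ^ (2 * m) := by
          rw [hnorma]; exact mul_le_mul_of_nonneg_left hsq2 (zpow_pos hq0 _).le
      _ = (p : ℝ) ^ (-v + 2 * m) := (zpow_add₀ (by positivity) _ _).symm
      _ ≤ (p : ℝ) ^ (0 : ℤ) := zpow_le_zpow_right₀ hq.le (by omega)
      _ = 1 := by norm_num
  have hA2 : ‖a‖ ≤ ‖x₀‖ ^ 2 := by
    have hsq2 : (p : ℝ) ^ (-(2 * m)) ≤ ‖x₀‖ ^ 2 := by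
      have := pow_le_pow_left₀ (zpow_pos hq0 (-m)).le hx₀1 2
      calc (p:ℝ) ^ (-(2 * m)) = ((p:ℝ) ^ (-m)) ^ 2 := by
            rw [← zpow_natCast ((p:ℝ)^(-m)) 2, ← zpow_mul]; ring_nf
        _ ≤ ‖x₀‖ ^ 2 := this
    calc ‖a‖ = (p : ℝ) ^ (-v) := hnorma
      _ ≤ (p : ℝ) ^ (-(2 * m)) := zpow_le_zpow_right₀ hq.le (by omega)
      _ ≤ ‖x₀‖ ^ 2 := hsq2
  by_cases hxx : x = x₀
  · simp [hxx]
  -- ‖x‖ = ‖x₀‖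
  have hxlt : ‖x - x₀‖ < ‖x₀‖ := lt_of_le_of_lt hx (div_lt_self hx₀pos hq)
  have hxeq : ‖x‖ = ‖x₀‖ := by
    have h1 : x = x₀ + (x - x₀) := by ring
    rcases eq_or_ne (x - x₀) 0 with h0 | h0
    · rw [h1, h0, add_zero]
    · have hne : ‖x₀‖ ≠ ‖x - x₀‖ := (ne_of_lt hxlt).symm
      rw [h1, Padic.add_eq_max_of_ne hne, max_eq_left hxlt.le]
  have hxne : x ≠ 0 := by
    intro h; rw [h, norm_zero] at hxeq; exact hx₀ne (norm_eq_zero.mp hxeq.symm)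
  -- unit lemma
  have hunit : ∀ y : ℚ_[p], ‖y‖ = ‖x₀‖ → ‖a * y ^ 2 + 1‖ = 1 := by
    intro y hy
    have hyne : y ≠ 0 := by
      intro h; rw [h, norm_zero] at hy; exact hx₀ne (norm_eq_zero.mp hy.symm)
    have hle : ‖a * y ^ 2‖ ≤ 1 := by
      rw [norm_mul, norm_pow, hy]; exact hA1
    rcases lt_or_eq_of_le hle with hlt | heq
    · have hne : ‖a * y ^ 2‖ ≠ ‖(1 : ℚ_[p])‖ := by rw [norm_one]; exact ne_of_lt hlt
      rw [Padic.add_eq_max_of_ne hne, norm_one, max_eq_right hlt.le]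
    · by_contra hne
      have hle2 : ‖a * y ^ 2 + 1‖ ≤ 1 := by
        have := Padic.nonarchimedean (a * y ^ 2) 1
        rw [heq, norm_one, max_self] at this
        exact this
      have hlt2 : ‖a * y ^ 2 + 1‖ < 1 := lt_of_le_of_ne hle2 hne
      have hclose : ‖1 - -(a * y ^ 2)‖ < 1 := by
        have : (1 : ℚ_[p]) - -(a * y ^ 2) = a * y ^ 2 + 1 := by ring
        rw [this]; exact hlt2
      obtain ⟨c, hc⟩ := sqrt_of_close_one p hp _ hclose
      exact hsq ⟨c / y, by field_simp; linear_combination hc⟩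
  set f : ℚ_[p] → ℚ_[p] := fun z => a * z + 1 / z with hf
  have hiter : ∀ y : ℚ_[p], f^[2] y = f (f y) := by
    intro y; rw [Function.iterate_succ_apply', Function.iterate_one]
  rw [hiter, hiter]
  -- norm of f y
  have hfnorm : ∀ y : ℚ_[p], ‖y‖ = ‖x₀‖ → ‖f y‖ = ‖x₀‖⁻¹ := by
    intro y hy
    have hyne : y ≠ 0 := by
      intro h; rw [h, norm_zero] at hy; exact hx₀ne (norm_eq_zero.mp hy.symm)
    have hrew : f y = (a * y ^ 2 + 1) / y := by
      rw [hf]; field_simp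
    rw [hrew, norm_div, hunit y hy, hy, one_div]
  have hsub : ∀ b c : ℚ_[p], ‖b - c‖ ≤ max ‖b‖ ‖c‖ := by
    intro b c
    have := Padic.nonarchimedean b (-c)
    rwa [← sub_eq_add_neg, norm_neg] at this
  have hstep : ∀ y z : ℚ_[p], y ≠ 0 → z ≠ 0 →
      ‖f y - f z‖ = ‖y - z‖ * ‖a - 1 / (y * z)‖ := by
    intro y z hy hz
    have hrew : f y - f z = (y - z) * (a - 1 / (y * z)) := by
      rw [hf]; field_simp; ring
    rw [hrew, norm_mul]
  have hx₀sq : (0 : ℝ) < ‖x₀‖ ^ 2 := by positivity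
  -- first step bound
  have hb1 : ‖a - 1 / (x * x₀)‖ ≤ (‖x₀‖ ^ 2)⁻¹ := by
    have hn : ‖1 / (x * x₀)‖ = (‖x₀‖ ^ 2)⁻¹ := by
      rw [norm_div, norm_one, norm_mul, hxeq]; ring_nf
    refine le_trans (hsub _ _) (max_le ?_ (le_of_eq hn))
    rw [← one_div]
    exact (le_div_iff₀ hx₀sq).mpr hA1
  -- second step bound
  have hfx : ‖f x‖ = ‖x₀‖⁻¹ := hfnorm x hxeq
  have hfx₀ : ‖f x₀‖ = ‖x₀‖⁻¹ := hfnorm x₀ rfl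
  have hinvpos : (0 : ℝ) < ‖x₀‖⁻¹ := inv_pos.mpr hx₀pos
  have hfxne : f x ≠ 0 := by
    intro h; rw [h, norm_zero] at hfx
    exact absurd hfx.symm (ne_of_gt hinvpos)
  have hfx₀ne : f x₀ ≠ 0 := by
    intro h; rw [h, norm_zero] at hfx₀
    exact absurd hfx₀.symm (ne_of_gt hinvpos)
  have hb2 : ‖a - 1 / (f x * f x₀)‖ ≤ ‖x₀‖ ^ 2 := by
    have hn : ‖1 / (f x * f x₀)‖ = ‖x₀‖ ^ 2 := by
      rw [norm_div, norm_one, norm_mul, hfx, hfx₀]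
      field_simp
    refine le_trans (hsub _ _) (max_le hA2 (le_of_eq hn))
  calc ‖f (f x) - f (f x₀)‖ = ‖f x - f x₀‖ * ‖a - 1 / (f x * f x₀)‖ :=
        hstep _ _ hfxne hfx₀ne
    _ ≤ ‖f x - f x₀‖ * ‖x₀‖ ^ 2 := by
        exact mul_le_mul_of_nonneg_left hb2 (norm_nonneg _)
    _ = (‖x - x₀‖ * ‖a - 1 / (x * x₀)‖) * ‖x₀‖ ^ 2 := by
        rw [hstep x x₀ hxne hx₀ne]
    _ ≤ (‖x - x₀‖ * (‖x₀‖ ^ 2)⁻¹) * ‖x₀‖ ^ 2 := by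
        have := mul_le_mul_of_nonneg_left hb1 (norm_nonneg (x - x₀))
        exact mul_le_mul_of_nonneg_right this hx₀sq.le
    _ = ‖x - x₀‖ := by field_simp
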